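/- For any signed graph on n vertices, any internal opinion vector s ∈ ℝ^n, and any initial vector z(0) ∈ ℝ^n, the Friedkin–Johnsen update z(t+1) = (I + D)^{−1}(s + A·z(t)) (equivalently, z_i(t+1) = (s_i + Σ_{j} A_{ij} z_j(t))/(1 + D_{ii}) for each i) converges as t → ∞; moreover I + L is invertible and the limit is z = (I + L)^{−1} s. -/

import Mathlib

open Matrix Filter Topology

theorem stmt_2 (n : ℕ) (hn : 1 ≤ n) (A : Matrix (Fin n) (Fin n) ℝ)
    (hAsymm : A.IsSymm) (hAdiag : ∀ i, A i i = 0)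
    (hAval : ∀ i j, A i j = -1 ∨ A i j = 0 ∨ A i j = 1)
    (D L : Matrix (Fin n) (Fin n) ℝ)
    (hD : D = Matrix.diagonal fun i => ∑ j, |A i j|)
    (hL : L = D - A)
    (s : Fin n → ℝ) (z : ℕ → Fin n → ℝ)
    (hupd : ∀ t i, z (t + 1) i = (s i + ∑ j, A i j * z t j) / (1 + D i i)) :
    IsUnit (1 + L) ∧
    Filter.Tendsto z Filter.atTop (nhds ((1 + L)⁻¹ *ᵥ s)) := by
  haveI : Nonempty (Fin n) := ⟨⟨0, hn⟩⟩
  set d : Fin n → ℝ := fun i => ∑ j, |A i j| with hd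
  have hd0 : ∀ i, 0 ≤ d i := fun i => Finset.sum_nonneg fun j _ => abs_nonneg _
  have hd1 : ∀ i, (0:ℝ) < 1 + d i := fun i => by linarith [hd0 i]
  set dm : ℝ := Finset.univ.sup' Finset.univ_nonempty d with hdm
  have hdle : ∀ i, d i ≤ dm := fun i => Finset.le_sup' _ (Finset.mem_univ i)
  have hdm0 : 0 ≤ dm := le_trans (hd0 (Classical.arbitrary _)) (hdle _)
  set K : NNReal := ⟨dm / (1 + dm), div_nonneg hdm0 (by linarith)⟩ with hK
  have hK1 : (K : ℝ) < 1 := by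
    show dm / (1 + dm) < 1
    rw [div_lt_one (by linarith)]; linarith
  have hK1' : K < 1 := by
    rw [← NNReal.coe_lt_coe]; simpa using hK1
  have hfrac : ∀ i, d i / (1 + d i) ≤ (K : ℝ) := by
    intro i
    show d i / (1 + d i) ≤ dm / (1 + dm)
    rw [div_le_div_iff₀ (hd1 i) (by linarith)]
    nlinarith [hdle i, hd0 i]
  -- the update map for a given source vector
  have key : ∀ (w : Fin n → ℝ), ContractingWith K
      (fun x (i : Fin n) => (w i + ∑ j, A i j * x j) / (1 + d i)) := by
    intro w
    refine ⟨hK1', LipschitzWith.of_dist_le_mul fun x y => ?_⟩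
    rw [dist_pi_le_iff (by positivity)]
    intro i
    have h1 : dist ((w i + ∑ j, A i j * x j) / (1 + d i))
        ((w i + ∑ j, A i j * y j) / (1 + d i))
        = |∑ j, A i j * (x j - y j)| / (1 + d i) := by
      rw [Real.dist_eq, div_sub_div_same, abs_div, abs_of_pos (hd1 i)]
      congr 2
      rw [add_sub_add_left_eq_sub, ← Finset.sum_sub_distrib]
      exact Finset.sum_congr rfl fun j _ => by ring
    have h2 : |∑ j, A i j * (x j - y j)| ≤ d i * dist x y := by
      calc |∑ j, A i j * (x j - y j)| ≤ ∑ j, |A i j * (x j - y j)| :=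
            Finset.abs_sum_le_sum_abs _ _
        _ = ∑ j, |A i j| * |x j - y j| := by simp [abs_mul]
        _ ≤ ∑ j, |A i j| * dist x y := Finset.sum_le_sum fun j _ =>
            mul_le_mul_of_nonneg_left
              (by rw [← Real.dist_eq]; exact dist_le_pi_dist x y j) (abs_nonneg _)
        _ = d i * dist x y := by rw [← Finset.sum_mul]
    rw [h1]
    calc |∑ j, A i j * (x j - y j)| / (1 + d i)
        ≤ (d i * dist x y) / (1 + d i) := by
          gcongr
      _ = (d i / (1 + d i)) * dist x y := by ring
      _ ≤ (K : ℝ) * dist x y :=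
          mul_le_mul_of_nonneg_right (hfrac i) dist_nonneg
  subst hD hL
  -- invertibility
  have hunit : IsUnit (1 + (Matrix.diagonal d - A)) := by
    rw [Matrix.isUnit_iff_isUnit_det, isUnit_iff_ne_zero]
    intro hdet
    obtain ⟨v, hv0, hv⟩ := (Matrix.exists_mulVec_eq_zero_iff).2 hdet
    have hvfix : Function.IsFixedPt
        (fun x (i : Fin n) => ((0:Fin n → ℝ) i + ∑ j, A i j * x j) / (1 + d i)) v := by
      funext i
      have := congrFun hv i
      simp only [Matrix.add_mulVec, Matrix.sub_mulVec, Matrix.one_mulVec,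
        Matrix.mulVec_diagonal, Pi.add_apply, Pi.sub_apply, Pi.zero_apply] at this ⊢
      have hm : (A *ᵥ v) i = ∑ j, A i j * v j := rfl
      rw [hm] at this
      rw [div_eq_iff (hd1 i).ne']
      linarith [this]
    have h0fix : Function.IsFixedPt
        (fun x (i : Fin n) => ((0:Fin n → ℝ) i + ∑ j, A i j * x j) / (1 + d i))
        (0 : Fin n → ℝ) := by
      funext i; simp
    exact hv0 ((key 0).fixedPoint_unique' hvfix h0fix)
  refine ⟨hunit, ?_⟩
  set f : (Fin n → ℝ) → (Fin n → ℝ) :=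
    fun x (i : Fin n) => (s i + ∑ j, A i j * x j) / (1 + d i) with hf
  have hcf := key s
  set p : Fin n → ℝ := hcf.fixedPoint with hpdef
  have hz : ∀ t, z t = f^[t] (z 0) := by
    intro t
    induction t with
    | zero => simp
    | succ t ih =>
      funext i
      rw [Function.iterate_succ_apply', ← ih]
      have := hupd t i
      simpa [Matrix.diagonal_apply_eq] using this
  have hfpeq : (1 + (Matrix.diagonal d - A)) *ᵥ p = s := by
    funext i
    have hfx : p i = (s i + ∑ j, A i j * p j) / (1 + d i) :=
      (congrFun hcf.fixedPoint_isFixedPt i).symm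
    simp only [Matrix.add_mulVec, Matrix.sub_mulVec, Matrix.one_mulVec,
      Matrix.mulVec_diagonal, Pi.add_apply, Pi.sub_apply]
    have hm : (A *ᵥ p) i = ∑ j, A i j * p j := rfl
    rw [hm]
    have h1 : (1 + d i) * p i = s i + ∑ j, A i j * p j := by
      rw [hfx, mul_div_assoc', mul_div_cancel_left₀ _ (hd1 i).ne']
    linarith [h1]
  have hinv : (1 + (Matrix.diagonal d - A))⁻¹ *ᵥ s = p := by
    have h2 : p = (1 + (Matrix.diagonal d - A))⁻¹ *ᵥ ((1 + (Matrix.diagonal d - A)) *ᵥ p) := by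
      rw [Matrix.mulVec_mulVec,
        Matrix.nonsing_inv_mul _ ((Matrix.isUnit_iff_isUnit_det _).mp hunit),
        Matrix.one_mulVec]
    rw [hfpeq] at h2
    exact h2.symm
  rw [hinv]
  exact (hcf.tendsto_iterate_fixedPoint (z 0)).congr fun t => (hz t).symm
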